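/- Let {G_i}_{i∈I} be a family of groups. If every subset of the direct product ∏_{i∈I} G_i is right index stable, then for each i ∈ I every subset of G_i is right index stable. -/

import Mathlib

open Pointwise

universe u

/-- The product `A * B` is direct. -/
def IsDirectProd {G : Type*} [Group G] (A B : Set G) : Prop :=
  ∀ a₁ ∈ A, ∀ b₁ ∈ B, ∀ a₂ ∈ A, ∀ b₂ ∈ B, a₁ * b₁ = a₂ * b₂ → a₁ = a₂ ∧ b₁ = b₂

/-- `B` is a right subfactor of `G` relative to `A`. -/
def IsRightSubfactor {G : Type*} [Group G] (A B : Set G) : Prop :=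
  IsDirectProd A B ∧ ∀ B' : Set G, B ⊆ B' → IsDirectProd A B' → B' = B

/-- The right upper subindex `|G:A|⁺`. -/
noncomputable def rUpperIndex {G : Type*} [Group G] (A : Set G) : Cardinal :=
  sSup {c | ∃ B : Set G, IsRightSubfactor A B ∧ c = Cardinal.mk ↥B}

/-- The right lower subindex `|G:A|⁻`. -/
noncomputable def rLowerIndex {G : Type*} [Group G] (A : Set G) : Cardinal :=
  sInf {c | ∃ B : Set G, IsRightSubfactor A B ∧ c = Cardinal.mk ↥B}

/-- `A` is right index stable in `G`. -/
def RightIndexStable {G : Type*} [Group G] (A : Set G) : Prop :=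
  rUpperIndex A = rLowerIndex A

/-- Every subset admits a right subfactor (by Zorn's lemma). -/
lemma exists_isRightSubfactor {G : Type*} [Group G] (A : Set G) :
    ∃ B : Set G, IsRightSubfactor A B := by
  obtain ⟨M, hM⟩ := zorn_subset {B : Set G | IsDirectProd A B} (by
    intro c hc hchain
    refine ⟨⋃₀ c, ?_, fun s hs => Set.subset_sUnion_of_mem hs⟩
    rintro a₁ ha₁ b₁ ⟨B₁, hB₁, hb₁⟩ a₂ ha₂ b₂ ⟨B₂, hB₂, hb₂⟩ heq
    rcases hchain.total hB₁ hB₂ with hle | hle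
    · exact hc hB₂ a₁ ha₁ b₁ (hle hb₁) a₂ ha₂ b₂ hb₂ heq
    · exact hc hB₁ a₁ ha₁ b₁ hb₁ a₂ ha₂ b₂ (hle hb₂) heq)
  exact ⟨M, hM.prop, fun B' hsub hdir => subset_antisymm (hM.2 hdir hsub) hsub⟩

/-- Lifting a right subfactor of a factor group to the product. -/
lemma lift_isRightSubfactor {ι : Type u} (G : ι → Type u) [∀ i, Group (G i)]
    [DecidableEq ι] (i : ι) (A : Set (G i)) (hA : A.Nonempty) (B : Set (G i))
    (hB : IsRightSubfactor A B) :
    IsRightSubfactor {f : ∀ j, G j | f i ∈ A} (Pi.mulSingle i '' B) := by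
  obtain ⟨a₀, ha₀⟩ := hA
  constructor
  · rintro a₁ ha₁ _ ⟨b₁, hb₁, rfl⟩ a₂ ha₂ _ ⟨b₂, hb₂, rfl⟩ heq
    have hi := congrFun heq i
    simp only [Pi.mul_apply, Pi.mulSingle_eq_same] at hi
    obtain ⟨_, hb⟩ := hB.1 (a₁ i) ha₁ b₁ hb₁ (a₂ i) ha₂ b₂ hb₂ hi
    subst hb
    exact ⟨mul_right_cancel heq, rfl⟩
  · intro B' hsub hdir
    -- injectivity of the projection on B'
    have hinj : ∀ g₁ ∈ B', ∀ g₂ ∈ B', g₁ i = g₂ i → g₁ = g₂ := by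
      intro g₁ hg₁ g₂ hg₂ hgi
      have key : (Function.update (fun j => g₂ j * (g₁ j)⁻¹) i a₀) * g₁ =
          (Pi.mulSingle i a₀) * g₂ := by
        funext j
        by_cases hj : j = i
        · subst hj
          simp [hgi]
        · simp [Function.update_of_ne hj, Pi.mulSingle_eq_of_ne hj]
      exact (hdir _ (by simpa using ha₀) g₁ hg₁ _ (by simpa using ha₀) g₂ hg₂ key).2
    -- the projection of B' is direct with A
    have hdirC : IsDirectProd A ((fun f => f i) '' B') := by
      rintro a₁ ha₁ _ ⟨g₁, hg₁, rfl⟩ a₂ ha₂ _ ⟨g₂, hg₂, rfl⟩ heq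
      have key : (Function.update (fun j => g₂ j * (g₁ j)⁻¹) i a₁) * g₁ =
          (Pi.mulSingle i a₂) * g₂ := by
        funext j
        by_cases hj : j = i
        · subst hj; simpa using heq
        · simp [Function.update_of_ne hj, Pi.mulSingle_eq_of_ne hj]
      obtain ⟨ha, hg⟩ := hdir _ (by simpa using ha₁) g₁ hg₁ _ (by simpa using ha₂) g₂ hg₂ key
      have : a₁ = a₂ := by
        have := congrFun ha i
        simpa using this
      exact ⟨this, by rw [hg]⟩
    have hBC : B ⊆ (fun f => f i) '' B' := by
      intro b hb
      exact ⟨Pi.mulSingle i b, hsub ⟨b, hb, rfl⟩, Pi.mulSingle_eq_same i b⟩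
    have hCB : (fun f => f i) '' B' = B := hB.2 _ hBC hdirC
    ext f
    constructor
    · intro hf
      have hfi : f i ∈ B := hCB ▸ ⟨f, hf, rfl⟩
      have hmem : Pi.mulSingle i (f i) ∈ B' := hsub ⟨f i, hfi, rfl⟩
      have heqf : f = Pi.mulSingle i (f i) :=
        hinj f hf _ hmem (by simp)
      exact ⟨f i, hfi, heqf.symm⟩
    · exact fun hf => hsub hf

theorem stmt11 {ι : Type u} (G : ι → Type u) [∀ i, Group (G i)]
    (h : ∀ A : Set (∀ i, G i), RightIndexStable A) :
    ∀ i : ι, ∀ A : Set (G i), RightIndexStable A := by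
  classical
  intro i A
  unfold RightIndexStable rUpperIndex rLowerIndex
  rcases A.eq_empty_or_nonempty with rfl | hA
  · have hset : {c | ∃ B : Set (G i), IsRightSubfactor ∅ B ∧ c = Cardinal.mk ↥B}
        = {Cardinal.mk ↥(Set.univ : Set (G i))} := by
      ext c
      constructor
      · rintro ⟨B, ⟨hdir, hmax⟩, rfl⟩
        have : (Set.univ : Set (G i)) = B :=
          hmax _ (Set.subset_univ B) (fun a ha => absurd ha (Set.notMem_empty a))
        rw [← this]; rfl
      · rintro rfl
        refine ⟨Set.univ, ⟨fun a ha => absurd ha (Set.notMem_empty a),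
          fun B' hsub _ => Set.eq_univ_of_univ_subset hsub⟩, rfl⟩
    rw [hset, csSup_singleton, csInf_singleton]
  · set SA := {c | ∃ B : Set (G i), IsRightSubfactor A B ∧ c = Cardinal.mk ↥B} with hSA
    set At : Set (∀ j, G j) := {f | f i ∈ A} with hAt
    set SAt := {c | ∃ B : Set (∀ j, G j), IsRightSubfactor At B ∧ c = Cardinal.mk ↥B}
      with hSAt
    have hsub : SA ⊆ SAt := by
      rintro c ⟨B, hB, rfl⟩
      refine ⟨Pi.mulSingle i '' B, lift_isRightSubfactor G i A hA B hB, ?_⟩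
      exact (Cardinal.mk_image_eq (Pi.mulSingle_injective (M := G) i)).symm
    have hneA : SA.Nonempty := by
      obtain ⟨B, hB⟩ := exists_isRightSubfactor A
      exact ⟨_, B, hB, rfl⟩
    have hbddA : BddAbove SA := ⟨Cardinal.mk (G i), by rintro c ⟨B, _, rfl⟩; exact Cardinal.mk_set_le B⟩
    have hbddAt : BddAbove SAt := ⟨Cardinal.mk (∀ j, G j), by rintro c ⟨B, _, rfl⟩; exact Cardinal.mk_set_le B⟩
    have hstab : sSup SAt = sInf SAt := h At
    have h1 : sSup SA ≤ sSup SAt := csSup_le_csSup hbddAt hneA hsub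
    have h2 : sInf SAt ≤ sInf SA := csInf_le_csInf (OrderBot.bddBelow _) hneA hsub
    have h3 : sInf SA ≤ sSup SA := csInf_le_csSup hneA (OrderBot.bddBelow _) hbddA
    exact le_antisymm ((h1.trans hstab.le).trans h2) h3
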